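/- Let R be a coherent commutative ring and S a coherent R-algebra such that R is an algebra retract of S. If S is coherent, then R is coherent. Consequently, if R ⊆ S are reduced Noetherian rings of characteristic p > 0, R is an algebra retract of S, and S is F-coherent, then R is F-coherent. -/

import Mathlib

/-- A commutative ring is *coherent* if every finitely generated ideal is
finitely presented (as a module). -/
def IsCoherentRing (R : Type*) [CommRing R] : Prop :=
  ∀ I : Ideal R, I.FG → Module.FinitePresentation R I

lemma isCoherentRing_of_retract {R S : Type} [CommRing R] [CommRing S]
    (ι : R →+* S) (φ : S →+* R) (hφι : φ.comp ι = RingHom.id R)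
    (hS : IsCoherentRing S) : IsCoherentRing R := by
  classical
  have hri : ∀ r, φ (ι r) = r := fun r => RingHom.congr_fun hφι r
  intro I hI
  obtain ⟨n, v, hv⟩ := Submodule.fg_iff_exists_fin_generating_family.mp hI
  set lR : (Fin n → R) →ₗ[R] R := Fintype.linearCombination R v with hlR
  set w : Fin n → S := fun i => ι (v i) with hw
  set lS : (Fin n → S) →ₗ[S] S := Fintype.linearCombination S w with hlS
  set J : Ideal S := Ideal.span (Set.range w) with hJ
  have hJfg : J.FG := ⟨Finset.univ.image w, by
    rw [Finset.coe_image, Finset.coe_univ, Set.image_univ]⟩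
  haveI hJfp : Module.FinitePresentation S J := hS J hJfg
  have hrangeS : LinearMap.range lS = (J : Submodule S S) := by
    rw [hlS, Fintype.range_linearCombination]
  have hmemS : ∀ x, lS x ∈ J := fun x => by
    have : lS x ∈ LinearMap.range lS := ⟨x, rfl⟩
    rwa [hrangeS] at this
  set lS' : (Fin n → S) →ₗ[S] J := lS.codRestrict (J : Submodule S S) hmemS with hlS'
  have hsurjS : Function.Surjective lS' := by
    rintro ⟨y, hy⟩
    rw [← hrangeS] at hy
    obtain ⟨x, hx⟩ := hy
    exact ⟨x, Subtype.ext hx⟩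
  have hkerS : (LinearMap.ker lS').FG := Module.FinitePresentation.fg_ker lS' hsurjS
  rw [hlS', LinearMap.ker_codRestrict] at hkerS
  obtain ⟨t, ht⟩ := hkerS
  -- the kernel over R
  have hgen : ∀ y ∈ (t : Set (Fin n → S)), lR (φ ∘ y) = 0 := by
    intro y hy
    have hyk : y ∈ LinearMap.ker lS := ht ▸ Submodule.subset_span hy
    have h0 : lS y = 0 := LinearMap.mem_ker.mp hyk
    have : φ (lS y) = 0 := by rw [h0, map_zero]
    rw [hlS, Fintype.linearCombination_apply, map_sum] at this
    rw [hlR, Fintype.linearCombination_apply]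
    calc ∑ i, (φ ∘ y) i • v i = ∑ i, φ (y i • w i) := by
          refine Finset.sum_congr rfl fun i _ => ?_
          simp only [Function.comp_apply, smul_eq_mul, hw, map_mul, hri]
      _ = 0 := this
  have hkerR : LinearMap.ker lR =
      Submodule.span R ((fun y => φ ∘ y) '' (t : Set (Fin n → S))) := by
    apply le_antisymm
    · intro k hk
      have hιk : (fun i => ι (k i)) ∈ LinearMap.ker lS := by
        rw [LinearMap.mem_ker, hlS, Fintype.linearCombination_apply]
        have h0 : lR k = 0 := LinearMap.mem_ker.mp hk
        rw [hlR, Fintype.linearCombination_apply] at h0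
        calc ∑ i, ι (k i) • w i = ι (∑ i, k i • v i) := by
              rw [map_sum]
              exact Finset.sum_congr rfl fun i _ => by
                simp only [smul_eq_mul, hw, map_mul]
          _ = 0 := by rw [h0, map_zero]
      rw [← ht] at hιk
      have hP : (φ ∘ fun i => ι (k i)) ∈
          Submodule.span R ((fun y => φ ∘ y) '' (t : Set (Fin n → S))) := by
        refine Submodule.span_induction
          (p := fun y _ => (φ ∘ y) ∈
            Submodule.span R ((fun y => φ ∘ y) '' (t : Set (Fin n → S))))
          (fun y hy => Submodule.subset_span ⟨y, hy, rfl⟩) ?_ ?_ ?_ hιk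
        · show ⇑φ ∘ (0 : Fin n → S) ∈ _
          have : φ ∘ (0 : Fin n → S) = 0 := by
            funext i; simp
          rw [this]; exact Submodule.zero_mem _
        · intro a b _ _ ha hb
          show ⇑φ ∘ (a + b) ∈ _
          have : φ ∘ (a + b) = φ ∘ a + φ ∘ b := by
            funext i; simp
          rw [this]; exact Submodule.add_mem _ ha hb
        · intro s a _ ha
          show ⇑φ ∘ (s • a) ∈ _
          have : φ ∘ (s • a) = φ s • (φ ∘ a) := by
            funext i
            simp only [Function.comp_apply, Pi.smul_apply, smul_eq_mul, map_mul]
          rw [this]; exact Submodule.smul_mem _ _ ha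
      have hkeq : φ ∘ (fun i => ι (k i)) = k := by
        funext i; simp [hri]
      rwa [hkeq] at hP
    · rw [Submodule.span_le]
      rintro _ ⟨y, hy, rfl⟩
      exact LinearMap.mem_ker.mpr (hgen y hy)
  have hkerRfg : (LinearMap.ker lR).FG :=
    ⟨t.image (fun y => φ ∘ y), by rw [Finset.coe_image, hkerR]⟩
  -- build the presentation of I
  have hrangeR : LinearMap.range lR = (I : Submodule R R) := by
    rw [hlR, Fintype.range_linearCombination, hv]
  have hmemR : ∀ x, lR x ∈ I := fun x => by
    have : lR x ∈ LinearMap.range lR := ⟨x, rfl⟩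
    rwa [hrangeR] at this
  have hsurjR : Function.Surjective (lR.codRestrict (I : Submodule R R) hmemR) := by
    rintro ⟨y, hy⟩
    rw [← hrangeR] at hy
    obtain ⟨x, hx⟩ := hy
    exact ⟨x, Subtype.ext hx⟩
  refine Module.finitePresentation_of_free_of_surjective _ hsurjR ?_
  rwa [LinearMap.ker_codRestrict]

/-- An algebra retract of a coherent ring is coherent; consequently, if
`R ⊆ S` are reduced Noetherian rings of characteristic `p > 0`, `R` is an algebra retract of
`S`, and `S` is `F`-coherent, then `R` is `F`-coherent. -/
theorem isCoherentRing_of_retract_and_fCoherent :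
    (∀ (R S : Type) (_ : CommRing R) (_ : CommRing S)
      (ι : R →+* S) (_ : Function.Injective ι)
      (φ : S →+* R) (_ : φ.comp ι = RingHom.id R),
      IsCoherentRing S → IsCoherentRing R) ∧
    (∀ (R S : Type) (_ : CommRing R) (_ : CommRing S),
      IsReduced R → IsReduced S → IsNoetherianRing R → IsNoetherianRing S →
      ∀ (p : ℕ) (_ : Fact p.Prime) (_ : CharP R p) (_ : CharP S p)
        (ι : R →+* S) (_ : Function.Injective ι)
        (φ : S →+* R) (_ : φ.comp ι = RingHom.id R),
        IsCoherentRing (PerfectClosure S p) → IsCoherentRing (PerfectClosure R p)) := by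
  constructor
  · intro R S _ _ ι _ φ hφι hS
    exact isCoherentRing_of_retract ι φ hφι hS
  · intro R S _ _ _ _ _ _ p hp hR hS ι hιinj φ hφι hSc
    haveI := hp
    set ι' : PerfectClosure R p →+* PerfectClosure S p :=
      PerfectClosure.lift R p (PerfectClosure S p) ((PerfectClosure.of S p).comp ι) with hι'
    set φ' : PerfectClosure S p →+* PerfectClosure R p :=
      PerfectClosure.lift S p (PerfectClosure R p) ((PerfectClosure.of R p).comp φ) with hφ'
    refine isCoherentRing_of_retract ι' φ' ?_ hSc
    have hιof : ι'.comp (PerfectClosure.of R p) = (PerfectClosure.of S p).comp ι :=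
      (PerfectClosure.lift R p (PerfectClosure S p)).symm_apply_apply _
    have hφof : φ'.comp (PerfectClosure.of S p) = (PerfectClosure.of R p).comp φ :=
      (PerfectClosure.lift S p (PerfectClosure R p)).symm_apply_apply _
    apply (PerfectClosure.lift R p (PerfectClosure R p)).symm.injective
    show (φ'.comp ι').comp (PerfectClosure.of R p) =
      (RingHom.id (PerfectClosure R p)).comp (PerfectClosure.of R p)
    ext r
    have h1 : ι' (PerfectClosure.of R p r) = PerfectClosure.of S p (ι r) :=
      RingHom.congr_fun hιof r
    have h2 : φ' (PerfectClosure.of S p (ι r)) = PerfectClosure.of R p (φ (ι r)) :=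
      RingHom.congr_fun hφof (ι r)
    have h3 : φ (ι r) = r := RingHom.congr_fun hφι r
    simp [RingHom.comp_apply, h1, h2, h3]
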